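/- Let G be a connected finite undirected multigraph with s, t ∈ V(G), s ≠ t, and let W_0, …, W_{q+1} be the bundles of G. Then for every i ∈ {0,…,q}, the induced subgraph G[W_i ∪ W_{i+1}] is connected. -/

import Mathlib

/-!
A finite undirected multigraph (parallel edges allowed, no loops) is modelled by a
vertex type `V`, an edge type `E` (both finite) and an endpoint map `ends : E → Sym2 V`
such that no edge is a loop (`¬ (ends e).IsDiag`).
-/

namespace FlowAug

variable {V E : Type}

/-- Two vertices are adjacent in `G - X` if some edge outside `X` joins them. -/
def Adj (ends : E → Sym2 V) (X : Set E) (u v : V) : Prop :=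
  ∃ e, e ∉ X ∧ ends e = s(u, v)

/-- Reachability in `G - X`. -/
def Reach (ends : E → Sym2 V) (X : Set E) : V → V → Prop :=
  Relation.ReflTransGen (Adj ends X)

/-- `R_S(X)` : the set of vertices reachable from the vertex set `S` in `G - X`. -/
def RS (ends : E → Sym2 V) (X : Set E) (S : Set V) : Set V :=
  {v | ∃ u ∈ S, Reach ends X u v}

/-- `δ(S)` : the set of edges with exactly one endpoint in `S`. -/
def edgeBoundary (ends : E → Sym2 V) (S : Set V) : Set E :=
  {e | ∃ u v, ends e = s(u, v) ∧ u ∈ S ∧ v ∉ S}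

/-- `X` is an `(S,T)`-cut. -/
def IsCut (ends : E → Sym2 V) (X : Set E) (S T : Set V) : Prop :=
  RS ends X S ∩ RS ends X T = ∅

/-- `X` is a minimal `(S,T)`-cut: no proper subset of `X` is an `(S,T)`-cut. -/
def IsMinimalCut (ends : E → Sym2 V) (X : Set E) (S T : Set V) : Prop :=
  IsCut ends X S T ∧ ∀ Y : Set E, Y ⊂ X → ¬ IsCut ends Y S T

/-- `X` is an `(S,T)`-cut of minimum cardinality. -/
def IsMinimumCut (ends : E → Sym2 V) (X : Set E) (S T : Set V) : Prop :=
  IsCut ends X S T ∧ ∀ Y : Set E, IsCut ends Y S T → X.ncard ≤ Y.ncard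

/-- `X` is an `(S,T)`-cut that is closest to `S`: every `(S,T)`-cut `X' ≠ X` with
`R_S(X') ⊆ R_S(X)` satisfies `|X'| > |X|`. -/
def IsClosestCut (ends : E → Sym2 V) (X : Set E) (S T : Set V) : Prop :=
  IsCut ends X S T ∧
    ∀ X' : Set E, IsCut ends X' S T → X' ≠ X →
      RS ends X' S ⊆ RS ends X S → X.ncard < X'.ncard

/-- `λ_G(s,t)` : the minimum cardinality of an `(s,t)`-cut (equivalently, by Menger's
theorem, the maximum number of pairwise edge-disjoint `(s,t)`-paths). -/
noncomputable def lamCut (ends : E → Sym2 V) (s t : V) : ℕ :=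
  sInf {n | ∃ X : Set E, IsCut ends X {s} {t} ∧ X.ncard = n}

/-- `Z_{s,t}` : the edges of `Z` with one endpoint in `R_s(Z)` and one in `R_t(Z)`. -/
def Zst (ends : E → Sym2 V) (s t : V) (Z : Set E) : Set E :=
  {e | e ∈ Z ∧ ∃ u v, ends e = s(u, v) ∧ u ∈ RS ends Z {s} ∧ v ∈ RS ends Z {t}}

/-- `Z` is a special `(s,t)`-cut: `Z` is an `(s,t)`-cut and `Z_{s,t}` is an `(s,t)`-cut. -/
def IsSpecial (ends : E → Sym2 V) (s t : V) (Z : Set E) : Prop :=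
  IsCut ends Z {s} {t} ∧ IsCut ends (Zst ends s t Z) {s} {t}

/-- `Z` is eligible for `(s,t)`: special, and every edge of `Z` has its endpoints in
different connected components of `G - Z`. -/
def IsEligible (ends : E → Sym2 V) (s t : V) (Z : Set E) : Prop :=
  IsSpecial ends s t Z ∧ ∀ e ∈ Z, ∀ u v : V, ends e = s(u, v) → ¬ Reach ends Z u v

/-- `Z` is a star `(s,t)`-cut: an `(s,t)`-cut each of whose edges has exactly one
endpoint in `R_s(Z)`. -/
def IsStarCut (ends : E → Sym2 V) (s t : V) (Z : Set E) : Prop :=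
  IsCut ends Z {s} {t} ∧
    ∀ e ∈ Z, ∃ u v : V, ends e = s(u, v) ∧ u ∈ RS ends Z {s} ∧ v ∉ RS ends Z {s}

/-- A path from `s` to `t` in the multigraph described by `ends`, given by its
sequence of vertices and traversed edges. -/
structure MGPath (V E : Type) (ends : E → Sym2 V) (s t : V) where
  n : ℕ
  vert : Fin (n + 1) → V
  edge : Fin n → E
  vert_zero : vert 0 = s
  vert_last : vert (Fin.last n) = t
  ends_eq : ∀ i : Fin n, ends (edge i) = s(vert i.castSucc, vert i.succ)

/-- A family of paths is (pairwise) edge-disjoint: no edge is used twice, neither on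
a single path nor on two different paths. -/
def EdgeDisjoint {ends : E → Sym2 V} {s t : V} {k : ℕ}
    (P : Fin k → MGPath V E ends s t) : Prop :=
  Function.Injective fun p : (Σ i : Fin k, Fin (P i).n) => (P p.1).edge p.2

/-- `P` is a witnessing `(s,t)`-flow for `Z`: a family of `λ_G(s,t)` pairwise
edge-disjoint `(s,t)`-paths such that every edge of `Z_{s,t}` occurs on a path of `P`
and every path of `P` contains exactly one edge of `Z`. -/
def IsWitnessingFlow (ends : E → Sym2 V) (s t : V) (Z : Set E) {k : ℕ}
    (P : Fin k → MGPath V E ends s t) : Prop :=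
  k = lamCut ends s t ∧ EdgeDisjoint P ∧
    (∀ e ∈ Zst ends s t Z, ∃ (i : Fin k) (j : Fin (P i).n), (P i).edge j = e) ∧
    ∀ i : Fin k, ∃! j : Fin (P i).n, (P i).edge j ∈ Z

/-- The vertices occurring on the paths of a family `P`. -/
def pathVerts {ends : E → Sym2 V} {s t : V} {k : ℕ}
    (P : Fin k → MGPath V E ends s t) : Set V :=
  {v | ∃ (i : Fin k) (m : Fin ((P i).n + 1)), (P i).vert m = v}

/-- The edges occurring on the paths of a family `P`. -/
def pathEdges {ends : E → Sym2 V} {s t : V} {k : ℕ}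
    (P : Fin k → MGPath V E ends s t) : Set E :=
  {e | ∃ (i : Fin k) (j : Fin (P i).n), (P i).edge j = e}

/-- The arcs obtained by orienting every edge of every path of `P` in the forward
direction (from `s` towards `t`). -/
def DirAdjOnFlow {ends : E → Sym2 V} {s t : V} {k : ℕ}
    (P : Fin k → MGPath V E ends s t) (u v : V) : Prop :=
  ∃ (i : Fin k) (l : Fin (P i).n), (P i).vert l.castSucc = u ∧ (P i).vert l.succ = v

/-- `N[S]` : the closed neighborhood of `S`. -/
def closedNbhd (ends : E → Sym2 V) (S : Set V) : Set V :=
  S ∪ {v | ∃ u ∈ S, ∃ e : E, ends e = s(u, v)}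

/-- `X` is the minimum `(s,t)`-cut closest to `s` among all minimum `(s,t)`-cuts
satisfying the property `P`. -/
def IsClosestMinCutAmong (ends : E → Sym2 V) (s t : V) (P : Set E → Prop)
    (X : Set E) : Prop :=
  IsMinimumCut ends X {s} {t} ∧ P X ∧
    ∀ Y : Set E, IsMinimumCut ends Y {s} {t} → P Y → Y ≠ X →
      RS ends Y {s} ⊆ RS ends X {s} → X.ncard < Y.ncard

/-- `C 0, …, C p` is the canonical sequence of non-crossing minimum `(s,t)`-cuts:
`C 0` is the unique minimum `(s,t)`-cut closest to `s`; `C i` is the unique minimum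
`(s,t)`-cut closest to `s` among all minimum `(s,t)`-cuts `X` with
`N[R_s(C (i-1))] ⊆ R_s(X)`; and `p` is the largest index for which such a cut exists. -/
def CanonSeq (ends : E → Sym2 V) (s t : V) (p : ℕ) (C : ℕ → Set E) : Prop :=
  IsClosestMinCutAmong ends s t (fun _ => True) (C 0) ∧
    (∀ i : ℕ, 0 < i → i ≤ p →
      IsClosestMinCutAmong ends s t
        (fun X => closedNbhd ends (RS ends (C (i - 1)) {s}) ⊆ RS ends X {s}) (C i)) ∧
    ¬ ∃ X : Set E, IsMinimumCut ends X {s} {t} ∧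
        closedNbhd ends (RS ends (C p) {s}) ⊆ RS ends X {s}

/-- The blocks `V_0, …, V_{p+1}` associated with the canonical sequence of cuts. -/
def blockOf (ends : E → Sym2 V) (s : V) (p : ℕ) (C : ℕ → Set E) (i : ℕ) : Set V :=
  if i = 0 then RS ends (C 0) {s}
  else if i ≤ p then RS ends (C i) {s} \ RS ends (C (i - 1)) {s}
  else Set.univ \ RS ends (C p) {s}

/-- Adjacency inside the induced subgraph `G[B]`. -/
def AdjIn (ends : E → Sym2 V) (B : Set V) (u v : V) : Prop :=
  u ∈ B ∧ v ∈ B ∧ ∃ e : E, ends e = s(u, v)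

/-- Reachability inside the induced subgraph `G[B]`. -/
def ReachIn (ends : E → Sym2 V) (B : Set V) : V → V → Prop :=
  Relation.ReflTransGen (AdjIn ends B)

/-- The induced subgraph `G[B]` is connected. -/
def ConnIn (ends : E → Sym2 V) (B : Set V) : Prop :=
  ∀ u ∈ B, ∀ v ∈ B, ReachIn ends B u v

/-- The connected component of `u` in the induced subgraph `G[B]`. -/
def compIn (ends : E → Sym2 V) (B : Set V) (u : V) : Set V :=
  {v | v ∈ B ∧ ReachIn ends B u v}

/-- The set of connected components of the induced subgraph `G[B]`. -/
def componentsIn (ends : E → Sym2 V) (B : Set V) : Set (Set V) :=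
  {K | ∃ u ∈ B, K = compIn ends B u}

/-- The union of the blocks `V_a, …, V_b`. -/
def unionBlocks (ends : E → Sym2 V) (s : V) (p : ℕ) (C : ℕ → Set E)
    (a b : ℕ) : Set V :=
  ⋃ j ∈ Set.Icc a b, blockOf ends s p C j

/-- `st` encodes the decomposition of the blocks `V_0, …, V_{p+1}` into bundles
`W_0, …, W_{q+1}`: bundle `W_i` consists of the blocks `V_{st i}, …, V_{st (i+1) - 1}`.
`W_0 = V_0`, and each further bundle is greedily either a single connected block, or a
maximal union of contiguous blocks inducing a disconnected subgraph. -/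
def IsBundleSeq (ends : E → Sym2 V) (s : V) (p : ℕ) (C : ℕ → Set E)
    (q : ℕ) (st : ℕ → ℕ) : Prop :=
  st 0 = 0 ∧ st 1 = 1 ∧ st (q + 2) = p + 2 ∧
    (∀ i j : ℕ, i < j → j ≤ q + 2 → st i < st j) ∧
    ∀ i : ℕ, 1 ≤ i → i ≤ q + 1 →
      (st (i + 1) = st i + 1 ∧ ConnIn ends (blockOf ends s p C (st i))) ∨
      (¬ ConnIn ends (blockOf ends s p C (st i)) ∧
        ¬ ConnIn ends (unionBlocks ends s p C (st i) (st (i + 1) - 1)) ∧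
        ∀ j : ℕ, st (i + 1) - 1 < j → j ≤ p + 1 →
          ConnIn ends (unionBlocks ends s p C (st i) j))

/-- The bundle `W_i`. -/
def bundleOf (ends : E → Sym2 V) (s : V) (p : ℕ) (C : ℕ → Set E) (st : ℕ → ℕ)
    (i : ℕ) : Set V :=
  unionBlocks ends s p C (st i) (st (i + 1) - 1)

/-- `C'_i` : the cut (among `C_0, …, C_p`) separating bundle `W_i` from `W_{i+1}`. -/
def interCut (C : ℕ → Set E) (st : ℕ → ℕ) (i : ℕ) : Set E :=
  C (st (i + 1) - 1)

/-- A bundle `W` is unaffected by `Z` if `N[W]` is contained in a single connected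
component of `G - Z`. -/
def Unaffected (ends : E → Sym2 V) (Z : Set E) (W : Set V) : Prop :=
  ∀ u ∈ closedNbhd ends W, ∀ v ∈ closedNbhd ends W, Reach ends Z u v

/-- The stretch `W_{a,b} = W_a ∪ ⋯ ∪ W_b` of bundles. -/
def stretchSet (ends : E → Sym2 V) (s : V) (p : ℕ) (C : ℕ → Set E) (st : ℕ → ℕ)
    (a b : ℕ) : Set V :=
  ⋃ i ∈ Set.Icc a b, bundleOf ends s p C st i

/-- The left interface of a stretch starting at bundle `W_a`. -/
def leftInterface (ends : E → Sym2 V) (s : V) (p : ℕ) (C : ℕ → Set E) (st : ℕ → ℕ)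
    (a : ℕ) : Set V :=
  if a = 0 then {s}
  else {v | v ∈ bundleOf ends s p C st a ∧ ∃ e ∈ interCut C st (a - 1), v ∈ ends e}

/-- The right interface of a stretch ending at bundle `W_b`. -/
def rightInterface (ends : E → Sym2 V) (s t : V) (p : ℕ) (C : ℕ → Set E)
    (st : ℕ → ℕ) (q b : ℕ) : Set V :=
  if b = q + 1 then {t}
  else {v | v ∈ bundleOf ends s p C st b ∧ ∃ e ∈ interCut C st b, v ∈ ends e}

/-- `W_{a,b}` is a maximal stretch of bundles all affected by `Z`. -/
def MaxAffStretch (ends : E → Sym2 V) (s : V) (p : ℕ) (C : ℕ → Set E)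
    (st : ℕ → ℕ) (q : ℕ) (Z : Set E) (a b : ℕ) : Prop :=
  a ≤ b ∧ b ≤ q + 1 ∧
    (∀ i : ℕ, a ≤ i → i ≤ b → ¬ Unaffected ends Z (bundleOf ends s p C st i)) ∧
    (a = 0 ∨ Unaffected ends Z (bundleOf ends s p C st (a - 1))) ∧
    (b = q + 1 ∨ Unaffected ends Z (bundleOf ends s p C st (b + 1)))

/-- `W_{a,b}` is a maximal stretch of bundles affected by `Z` containing both a vertex
reachable from `s` and a vertex reachable from `t` in `G - Z`. -/
def StronglyAffStretch (ends : E → Sym2 V) (s t : V) (p : ℕ) (C : ℕ → Set E)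
    (st : ℕ → ℕ) (q : ℕ) (Z : Set E) (a b : ℕ) : Prop :=
  MaxAffStretch ends s p C st q Z a b ∧
    (stretchSet ends s p C st a b ∩ RS ends Z {s}).Nonempty ∧
    (stretchSet ends s p C st a b ∩ RS ends Z {t}).Nonempty

/-- Adjacency inside the induced subgraph `G[B]` avoiding the edge set `X`. -/
def AdjInX (ends : E → Sym2 V) (B : Set V) (X : Set E) (u v : V) : Prop :=
  u ∈ B ∧ v ∈ B ∧ ∃ e, e ∉ X ∧ ends e = s(u, v)

/-- Reachability inside `G[B] - X`. -/
def ReachInX (ends : E → Sym2 V) (B : Set V) (X : Set E) : V → V → Prop :=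
  Relation.ReflTransGen (AdjInX ends B X)

/-- `X` is a star `(a,b)`-cut of the induced subgraph `H = G[B]`: in `H - X` no path
connects `a` and `b`, and every edge of `X` has exactly one endpoint reachable from
`a` in `H - X`. -/
def IsStarCutIn (ends : E → Sym2 V) (B : Set V) (a b : V) (X : Set E) : Prop :=
  ¬ ReachInX ends B X a b ∧
    ∀ e ∈ X, ∃ u v : V, ends e = s(u, v) ∧
      ReachInX ends B X a u ∧ ¬ ReachInX ends B X a v

end FlowAug

namespace FlowAug


section Aux

variable {V E : Type} {ends : E → Sym2 V} {s t : V} {p : ℕ} {C : ℕ → Set E}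

lemma mem_RS_single {X : Set E} {v : V} :
    v ∈ RS ends X {s} ↔ Reach ends X s v := by simp [RS]

lemma adjIn_symm {B : Set V} {u v : V} (h : AdjIn ends B u v) : AdjIn ends B v u := by
  obtain ⟨h1, h2, e, he⟩ := h
  exact ⟨h2, h1, e, he.trans Sym2.eq_swap⟩

lemma reachIn_symm {B : Set V} {u v : V} (h : ReachIn ends B u v) : ReachIn ends B v u :=
  @Std.Symm.symm _ _ (@Relation.ReflTransGen.stdSymm _ _ ⟨fun _ _ hh => adjIn_symm hh⟩) _ _ h

lemma reachIn_mono {B B' : Set V} (hBB : B ⊆ B') {u v : V} (h : ReachIn ends B u v) :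
    ReachIn ends B' u v :=
  Relation.ReflTransGen.mono (fun _ _ ⟨ha, hb, he⟩ => ⟨hBB ha, hBB hb, he⟩) _ _ h

lemma connIn_RS (ends : E → Sym2 V) (X : Set E) (s : V) :
    ConnIn ends (RS ends X {s}) := by
  have key : ∀ v, Reach ends X s v → ReachIn ends (RS ends X {s}) s v := by
    intro v hv
    induction hv with
    | refl => exact Relation.ReflTransGen.refl
    | tail hy hadj ih =>
      obtain ⟨e, heX, he⟩ := hadj
      exact ih.tail ⟨mem_RS_single.mpr hy, mem_RS_single.mpr (hy.tail ⟨e, heX, he⟩), e, he⟩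
  intro u hu v hv
  exact Relation.ReflTransGen.trans (reachIn_symm (key u (mem_RS_single.mp hu)))
    (key v (mem_RS_single.mp hv))

lemma RS_step (hC : CanonSeq ends s t p C) {i : ℕ} (h1 : 0 < i) (h2 : i ≤ p) :
    RS ends (C (i - 1)) {s} ⊆ RS ends (C i) {s} :=
  Set.subset_union_left.trans ((hC.2.1 i h1 h2).2.1)

lemma RS_chain (hC : CanonSeq ends s t p C) :
    ∀ m, m ≤ p → ∀ l, l ≤ m → RS ends (C l) {s} ⊆ RS ends (C m) {s} := by
  intro m
  induction m with
  | zero =>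
    intro _ l hl
    have : l = 0 := Nat.le_zero.mp hl
    subst this; exact subset_rfl
  | succ m ih =>
    intro hm l hl
    by_cases hlm : l = m + 1
    · subst hlm; exact subset_rfl
    · have hl' : l ≤ m := by omega
      exact (ih (by omega) l hl').trans (RS_step hC (Nat.succ_pos m) hm)

lemma blockOf_zero : blockOf ends s p C 0 = RS ends (C 0) {s} := by simp [blockOf]

lemma blockOf_mid {m : ℕ} (h1 : 1 ≤ m) (h2 : m ≤ p) :
    blockOf ends s p C m = RS ends (C m) {s} \ RS ends (C (m - 1)) {s} := by
  unfold blockOf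
  rw [if_neg (by omega), if_pos h2]

lemma blockOf_last : blockOf ends s p C (p + 1) = Set.univ \ RS ends (C p) {s} := by
  unfold blockOf
  rw [if_neg (by omega), if_neg (by omega)]

lemma blockCover (hC : CanonSeq ends s t p C) :
    ∀ m, m ≤ p → ∀ c j, 1 ≤ j → j ≤ m → c ∉ RS ends (C (j - 1)) {s} →
      c ∈ RS ends (C m) {s} → ∃ l, j ≤ l ∧ l ≤ m ∧ c ∈ blockOf ends s p C l := by
  intro m
  induction m with
  | zero => intro _ c j h1 hjm; omega
  | succ m ih =>
    intro hm c j h1 hjm hcA hcm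
    by_cases hc : c ∈ RS ends (C m) {s}
    · have hjm' : j ≤ m := by
        by_contra h
        have hj : j = m + 1 := by omega
        subst hj
        exact hcA hc
      obtain ⟨l, h1l, h2l, h3l⟩ := ih (by omega) c j h1 hjm' hcA hc
      exact ⟨l, h1l, by omega, h3l⟩
    · refine ⟨m + 1, hjm, le_rfl, ?_⟩
      rw [blockOf_mid (by omega) hm]
      exact ⟨hcm, hc⟩

lemma exit_lemma (ends : E → Sym2 V) (X : Set E) (A : Set V) (s : V) (hs : s ∈ A) :
    ∀ {w : V}, Reach ends X s w → w ∉ A →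
      ∃ v u e, u ∈ A ∧ ends e = s(u, v) ∧ v ∉ A ∧ v ∈ RS ends X {s} ∧
        Relation.ReflTransGen
          (fun a b => (∃ e', ends e' = s(a, b)) ∧ a ∉ A ∧ a ∈ RS ends X {s} ∧
            b ∉ A ∧ b ∈ RS ends X {s}) v w := by
  intro w hw
  induction hw with
  | refl => exact fun h => absurd hs h
  | @tail y z hy hadj ih =>
    intro hz
    obtain ⟨e, heX, he⟩ := hadj
    have hzRS : z ∈ RS ends X {s} := mem_RS_single.mpr (hy.tail ⟨e, heX, he⟩)
    by_cases hyA : y ∈ A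
    · exact ⟨z, y, e, hyA, he, hz, hzRS, Relation.ReflTransGen.refl⟩
    · obtain ⟨v, u, e', hu, he', hv, hvRS, hchain⟩ := ih hyA
      exact ⟨v, u, e', hu, he', hv, hvRS,
        hchain.tail ⟨⟨e, he⟩, hyA, mem_RS_single.mpr hy, hz, hzRS⟩⟩

lemma mem_unionBlocks {a b : ℕ} {x : V} :
    x ∈ unionBlocks ends s p C a b ↔
      ∃ j, a ≤ j ∧ j ≤ b ∧ x ∈ blockOf ends s p C j := by
  simp [unionBlocks, and_assoc]

lemma unionBlocks_singleton {a : ℕ} :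
    unionBlocks ends s p C a a = blockOf ends s p C a := by
  ext x
  rw [mem_unionBlocks]
  constructor
  · rintro ⟨j, h1, h2, h3⟩
    have : j = a := by omega
    subst this; exact h3
  · intro h; exact ⟨a, le_rfl, le_rfl, h⟩

lemma unionBlocks_union {a b c : ℕ} (hab : a < b) (hbc : b ≤ c) :
    unionBlocks ends s p C a (b - 1) ∪ unionBlocks ends s p C b c =
      unionBlocks ends s p C a c := by
  ext x
  rw [Set.mem_union, mem_unionBlocks, mem_unionBlocks, mem_unionBlocks]
  constructor
  · rintro (⟨j, h1, h2, h3⟩ | ⟨j, h1, h2, h3⟩) <;> exact ⟨j, by omega, by omega, h3⟩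
  · rintro ⟨j, h1, h2, h3⟩
    by_cases hj : j ≤ b - 1
    · exact Or.inl ⟨j, h1, hj, h3⟩
    · exact Or.inr ⟨j, by omega, h2, h3⟩

lemma reach_prev (hC : CanonSeq ends s t p C)
    (hconn : ∀ u v : V, Reach ends (∅ : Set E) u v)
    {j k : ℕ} (hj : 1 ≤ j) (hk : k ≤ p + 1)
    {B : Set V} (hB1 : blockOf ends s p C (j - 1) ⊆ B)
    (hB2 : unionBlocks ends s p C j k ⊆ B) :
    ∀ w ∈ unionBlocks ends s p C j k,
      ∃ u ∈ blockOf ends s p C (j - 1), ReachIn ends B w u := by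
  intro w hw
  obtain ⟨m, hjm, hmk, hwm⟩ := mem_unionBlocks.mp hw
  obtain ⟨X, hreach, hmap⟩ :
      ∃ X : Set E, Reach ends X s w ∧
        (∀ c, c ∉ RS ends (C (j - 1)) {s} → c ∈ RS ends X {s} →
          c ∈ unionBlocks ends s p C j k) := by
    by_cases hmp : m ≤ p
    · refine ⟨C m, ?_, ?_⟩
      · have h := hwm
        rw [blockOf_mid (by omega) hmp] at h
        exact mem_RS_single.mp h.1
      · intro c hcA hcRS
        obtain ⟨l, h1l, h2l, h3l⟩ := blockCover hC m hmp c j hj (by omega) hcA hcRS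
        exact mem_unionBlocks.mpr ⟨l, h1l, by omega, h3l⟩
    · have hm : m = p + 1 := by omega
      refine ⟨∅, hconn s w, ?_⟩
      intro c hcA _
      by_cases hcp : c ∈ RS ends (C p) {s}
      · have hjp : j ≤ p := by
          by_contra h
          have hj1 : j = p + 1 := by omega
          subst hj1
          exact hcA hcp
        obtain ⟨l, h1l, h2l, h3l⟩ := blockCover hC p le_rfl c j hj hjp hcA hcp
        exact mem_unionBlocks.mpr ⟨l, h1l, by omega, h3l⟩
      · refine mem_unionBlocks.mpr ⟨p + 1, by omega, by omega, ?_⟩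
        rw [blockOf_last]
        exact ⟨trivial, hcp⟩
  have hwA : w ∉ RS ends (C (j - 1)) {s} := by
    intro hwin
    by_cases hmp : m ≤ p
    · rw [blockOf_mid (by omega) hmp] at hwm
      exact hwm.2 (RS_chain hC (m - 1) (by omega) (j - 1) (by omega) hwin)
    · have hm : m = p + 1 := by omega
      subst hm
      rw [blockOf_last] at hwm
      exact hwm.2 (RS_chain hC p le_rfl (j - 1) (by omega) hwin)
  obtain ⟨v, u, e, huA, he, hvA, hvRS, hchain⟩ :=
    exit_lemma ends X (RS ends (C (j - 1)) {s}) s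
      (mem_RS_single.mpr Relation.ReflTransGen.refl) hreach hwA
  have hublock : u ∈ blockOf ends s p C (j - 1) := by
    by_cases hj1 : j - 1 = 0
    · rw [hj1, blockOf_zero]
      rw [hj1] at huA
      exact huA
    · rw [blockOf_mid (by omega) (by omega)]
      refine ⟨huA, fun hu2 => hvA ?_⟩
      exact (hC.2.1 (j - 1) (by omega) (by omega)).2.1 (Or.inr ⟨u, hu2, e, he⟩)
  have hreachvw : ReachIn ends B v w := by
    refine Relation.ReflTransGen.mono ?_ _ _ hchain
    rintro a b ⟨⟨e', he'⟩, haA, haRS, hbA, hbRS⟩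
    exact ⟨hB2 (hmap a haA haRS), hB2 (hmap b hbA hbRS), e', he'⟩
  refine ⟨u, hublock, (reachIn_symm hreachvw).tail ?_⟩
  exact ⟨hB2 (hmap v hvA hvRS), hB1 hublock, e, he.trans Sym2.eq_swap⟩

lemma assembleA (hC : CanonSeq ends s t p C)
    (hconn : ∀ u v : V, Reach ends (∅ : Set E) u v)
    {a k : ℕ} (hak : a + 1 ≤ k) (hk : k ≤ p + 1)
    (hca : ConnIn ends (blockOf ends s p C a)) :
    ConnIn ends (blockOf ends s p C a ∪ unionBlocks ends s p C (a + 1) k) := by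
  have hB1 : blockOf ends s p C a ⊆
      blockOf ends s p C a ∪ unionBlocks ends s p C (a + 1) k := Set.subset_union_left
  have hB2 : unionBlocks ends s p C (a + 1) k ⊆
      blockOf ends s p C a ∪ unionBlocks ends s p C (a + 1) k := Set.subset_union_right
  have key : ∀ w ∈ blockOf ends s p C a ∪ unionBlocks ends s p C (a + 1) k,
      ∃ u ∈ blockOf ends s p C a,
        ReachIn ends (blockOf ends s p C a ∪ unionBlocks ends s p C (a + 1) k) w u := by
    rintro w (hw | hw)
    · exact ⟨w, hw, Relation.ReflTransGen.refl⟩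
    · exact reach_prev hC hconn (j := a + 1) (by omega) hk hB1 hB2 w hw
  intro u hu v hv
  obtain ⟨u', hu', h1⟩ := key u hu
  obtain ⟨v', hv', h2⟩ := key v hv
  exact Relation.ReflTransGen.trans
    (Relation.ReflTransGen.trans h1 (reachIn_mono hB1 (hca u' hu' v' hv')))
    (reachIn_symm h2)

end Aux

/-- Any two consecutive bundles of a connected multigraph together
induce a connected subgraph. -/
theorem consecutive_bundles_connected {V E : Type} [Fintype V] [Fintype E]
    (ends : E → Sym2 V) (hloop : ∀ e, ¬ (ends e).IsDiag)
    (hconn : ∀ u v : V, Reach ends (∅ : Set E) u v)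
    (s t : V) (hst : s ≠ t)
    (p : ℕ) (C : ℕ → Set E) (hC : CanonSeq ends s t p C)
    (q : ℕ) (st : ℕ → ℕ) (hW : IsBundleSeq ends s p C q st) :
    ∀ i : ℕ, i ≤ q →
      ConnIn ends (bundleOf ends s p C st i ∪ bundleOf ends s p C st (i + 1)) := by
  obtain ⟨h0, h1, hq2, hmono, hclause⟩ := hW
  have hle : ∀ i j : ℕ, i ≤ j → j ≤ q + 2 → st i ≤ st j := by
    intro i j hij hj
    rcases eq_or_lt_of_le hij with h | h
    · subst h; exact le_rfl
    · exact (hmono i j h hj).le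
  intro i hi
  have hb1 : 0 < st (i + 1) := by
    have := hmono 0 (i + 1) (by omega) (by omega); omega
  have hbc : st (i + 1) < st (i + 1 + 1) := hmono (i + 1) (i + 1 + 1) (by omega) (by omega)
  have hcp : st (i + 1 + 1) ≤ p + 2 := by
    have := hle (i + 1 + 1) (q + 2) (by omega) le_rfl; omega
  have caseA : st (i + 1) = st i + 1 → ConnIn ends (blockOf ends s p C (st i)) →
      ConnIn ends (bundleOf ends s p C st i ∪ bundleOf ends s p C st (i + 1)) := by
    intro hsucc hcb
    unfold bundleOf
    have e1 : st (i + 1) - 1 = st i := by omega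
    rw [e1, hsucc, unionBlocks_singleton]
    exact assembleA hC hconn (by omega) (by omega) hcb
  rcases Nat.eq_zero_or_pos i with hi0 | hipos
  · subst hi0
    refine caseA (show st 1 = st 0 + 1 by rw [h0, h1]) ?_
    have : ConnIn ends (blockOf ends s p C (st 0)) := by
      rw [h0, blockOf_zero]; exact connIn_RS ends (C 0) s
    exact this
  · rcases hclause i hipos (by omega) with ⟨hsucc, hcb⟩ | ⟨_, _, hmax⟩
    · exact caseA hsucc hcb
    · unfold bundleOf
      rw [unionBlocks_union (hmono i (i + 1) (by omega) (by omega)) (by omega)]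
      exact hmax (st (i + 1 + 1) - 1) (by omega) (by omega)

end FlowAug
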